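/- Fix positive integers n and w, a probability space Ω, and a random hash function h : Ω → (Fin n → Fin w) that is pairwise uniform, i.e., for all distinct i, i' ∈ Fin n, P(h(i) = h(i')) ≤ 1/w. Let y ∈ ℝ^n have nonnegative entries and fix a coordinate i. Then the expected value of the single-row sketch cell containing i satisfies E[ Σ_{i' : h(i') = h(i)} y_{i'} ] ≤ y_i + ‖y‖₁ / w, where ‖y‖₁ = Σ_{i'} y_{i'}. -/

import Mathlib

open Finset MeasureTheory ProbabilityTheory

/-- For a single row of a count-min sketch of width `w` with a pairwise uniform
random hash function `h`, the expected value of the cell containing coordinate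
`i` is at most `y i + ‖y‖₁ / w`. -/
theorem cm_cell_expectation_le
    (n w : ℕ) (hn : 0 < n) (hw : 0 < w)
    {Ω : Type*} [MeasureSpace Ω] [IsProbabilityMeasure (ℙ : Measure Ω)]
    (h : Ω → Fin n → Fin w) (hmeas : Measurable h)
    (hpair : ∀ i i' : Fin n, i ≠ i' → ℙ {ω | h ω i = h ω i'} ≤ 1 / w)
    (y : Fin n → ℝ) (hy : ∀ i, 0 ≤ y i) (i : Fin n) :
    ∫ ω, (∑ i' ∈ Finset.univ.filter (fun i' => h ω i' = h ω i), y i') ∂ℙ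
      ≤ y i + (∑ i', y i') / w := by
  classical
  set s : Fin n → Set Ω := fun i' => {ω | h ω i' = h ω i} with hs
  have hmeasset : ∀ i' : Fin n, MeasurableSet (s i') := by
    intro i'
    exact measurableSet_eq_fun ((measurable_pi_apply i').comp hmeas)
      ((measurable_pi_apply i).comp hmeas)
  have hrw : ∀ ω, (∑ i' ∈ Finset.univ.filter (fun i' => h ω i' = h ω i), y i')
      = ∑ i' : Fin n, (s i').indicator (fun _ => y i') ω := by
    intro ω
    rw [Finset.sum_filter]
    refine Finset.sum_congr rfl fun i' _ => ?_
    simp [Set.indicator_apply, hs, Set.mem_setOf_eq]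
  have hint : ∀ i' : Fin n, Integrable ((s i').indicator (fun _ => y i')) ℙ :=
    fun i' => (integrable_const (y i')).indicator (hmeasset i')
  calc ∫ ω, (∑ i' ∈ Finset.univ.filter (fun i' => h ω i' = h ω i), y i') ∂ℙ
      = ∑ i' : Fin n, ∫ ω, (s i').indicator (fun _ => y i') ω ∂ℙ := by
        rw [← integral_finset_sum _ (fun i' _ => hint i')]
        exact integral_congr_ae (Filter.Eventually.of_forall hrw)
    _ = ∑ i' : Fin n, (ℙ (s i')).toReal * y i' := by
        refine Finset.sum_congr rfl fun i' _ => ?_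
        rw [integral_indicator_const _ (hmeasset i')]; simp [mul_comm, measureReal_def]
    _ ≤ y i + (∑ i', y i') / w := by
        rw [← Finset.add_sum_erase _ _ (Finset.mem_univ i)]
        have hi : (ℙ (s i)).toReal * y i = y i := by
          have : s i = Set.univ := by ext ω; simp [hs]
          simp [this]
        rw [hi]
        gcongr y i + ?_
        calc ∑ i' ∈ Finset.univ.erase i, (ℙ (s i')).toReal * y i'
            ≤ ∑ i' ∈ Finset.univ.erase i, (1 / w) * y i' := by
              refine Finset.sum_le_sum fun i' hi' => ?_
              have hne : i' ≠ i := Finset.ne_of_mem_erase hi'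
              have hle : ℙ (s i') ≤ 1 / w := hpair i' i hne
              have hwtop : (1 / (w : ENNReal)) ≠ ⊤ := by
                simp [ENNReal.div_eq_top, Nat.cast_ne_zero.mpr hw.ne']
              have h1 : (ℙ (s i')).toReal ≤ (1 / (w : ENNReal)).toReal :=
                ENNReal.toReal_mono hwtop hle
              have h2 : (1 / (w : ENNReal)).toReal = 1 / (w : ℝ) := by
                rw [ENNReal.toReal_div]; simp
              exact mul_le_mul_of_nonneg_right (h2 ▸ h1) (hy i')
          _ ≤ ∑ i' : Fin n, (1 / w) * y i' := by
              refine Finset.sum_le_sum_of_subset_of_nonneg (Finset.subset_univ _) ?_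
              intro j _ _
              exact mul_nonneg (by positivity) (hy j)
          _ = (∑ i', y i') / w := by
              rw [← Finset.mul_sum]; ring
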